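/- Let G be a graph, k ≥ 1, and F a field containing a primitive k-th root of unity w. The system consisting of y_v^k = 1 for each vertex v and ∑_{j=0}^{k-1} y_u^j · y_v^{k-1-j} = 0 for each edge (u,v) has a common solution in F if and only if G has a proper k-colouring. -/

import Mathlib

theorem stmt_2 {V : Type} (F : Type) [Field F] (G : SimpleGraph V) (k : ℕ)
    (hk : 1 ≤ k) (hchar : (k : F) ≠ 0) (w : F) (hw1 : w ^ k = 1)
    (hwprim : ∀ j : ℕ, 0 < j → j < k → w ^ j ≠ 1) :
    (∃ y : V → F,
      (∀ v, y v ^ k = 1) ∧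
      (∀ u v, G.Adj u v →
        ∑ j ∈ Finset.range k, (y u) ^ j * (y v) ^ (k - 1 - j) = 0)) ↔
    ∃ χ : V → Fin k, ∀ u v, G.Adj u v → χ u ≠ χ v := by
  have hk0 : 0 < k := hk
  haveI : NeZero k := ⟨hk0.ne'⟩
  have hprim : IsPrimitiveRoot w k := by
    rw [IsPrimitiveRoot.iff hk0]
    exact ⟨hw1, hwprim⟩
  constructor
  · rintro ⟨y, hy1, hy2⟩
    choose χ hχlt hχ using fun v => hprim.eq_pow_of_pow_eq_one (hy1 v)
    refine ⟨fun v => ⟨χ v, hχlt v⟩, fun u v huv h => ?_⟩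
    have heq : y u = y v := by
      rw [← hχ u, ← hχ v]
      simpa [Fin.ext_iff] using congrArg (fun i : Fin k => w ^ (i : ℕ)) h
    have hsum := hy2 u v huv
    rw [heq] at hsum
    have hconst : ∀ j ∈ Finset.range k, y v ^ j * y v ^ (k - 1 - j) = y v ^ (k - 1) := by
      intro j hj
      rw [← pow_add]
      congr 1
      have := Finset.mem_range.mp hj
      omega
    rw [Finset.sum_congr rfl hconst, Finset.sum_const, Finset.card_range,
      nsmul_eq_mul] at hsum
    have hyv : y v ≠ 0 := by
      intro h0
      have := hy1 v
      rw [h0, zero_pow hk0.ne'] at this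
      exact zero_ne_one this
    rcases mul_eq_zero.mp hsum with h' | h'
    · exact hchar h'
    · exact pow_ne_zero _ hyv h'
  · rintro ⟨χ, hχ⟩
    refine ⟨fun v => w ^ ((χ v : ℕ)), fun v => ?_, fun u v huv => ?_⟩
    · rw [← pow_mul, mul_comm, pow_mul, hw1, one_pow]
    · have hne : w ^ ((χ u : ℕ)) - w ^ ((χ v : ℕ)) ≠ 0 := by
        intro h0
        exact hχ u v huv (Fin.ext (hprim.pow_inj (χ u).isLt (χ v).isLt (sub_eq_zero.mp h0)))
      have hgeo := geom_sum₂_mul (w ^ ((χ u : ℕ))) (w ^ ((χ v : ℕ))) k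
      have hpow : ∀ i : Fin k, (w ^ (i : ℕ)) ^ k = 1 := by
        intro i
        rw [← pow_mul, mul_comm, pow_mul, hw1, one_pow]
      rw [hpow (χ u), hpow (χ v), sub_self] at hgeo
      rcases mul_eq_zero.mp hgeo with h' | h'
      · exact h'
      · exact absurd h' hne
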